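/- For h ∈ H(T), the sequence of iterates Aⁿh is pointwise non-increasing, the sequence (Aⁿh)* ∘ i is pointwise non-decreasing, and for all n, (Aⁿh)(x,x*) - ((Aⁿh)* ∘ i)(x,x*) ≤ 2^{-(n-1)}((A h)(x,x*) - ((A h)* ∘ i)(x,x*)) for (x,x*) ∈ dom(h) ∩ dom(h* ∘ i). -/

import Mathlib

open NormedSpace

noncomputable section

/-- Convexity for extended-real-valued functions. -/
def EConvexOn {E : Type*} [AddCommMonoid E] [Module ℝ E] (f : E → EReal) : Prop :=
  ∀ x y : E, ∀ a b : ℝ, 0 ≤ a → 0 ≤ b → a + b = 1 →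
    f (a • x + b • y) ≤ (a : EReal) * f x + (b : EReal) * f y

/-- Properness: somewhere finite and never `⊥` (i.e. values in `ℝ ∪ {+∞}`). -/
def EProper {E : Type*} (f : E → EReal) : Prop :=
  (∃ x, f x ≠ ⊤) ∧ ∀ x, f x ≠ ⊥

variable {X : Type*} [NormedAddCommGroup X] [NormedSpace ℝ X]

/-- The ε-subdifferential of `f : X → ℝ ∪ {+∞}` at `x`. -/
def epsSubdiff (f : X → EReal) (ε : ℝ) (x : X) : Set (StrongDual ℝ X) :=
  {p | f x ≠ ⊤ ∧ ∀ y : X, f x + ((p (y - x) : ℝ) : EReal) ≤ f y + (ε : EReal)}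

/-- The Fenchel conjugate of `f : X → ℝ ∪ {+∞}`. -/
def fconj (f : X → EReal) (p : StrongDual ℝ X) : EReal :=
  ⨆ y : X, ((p y : ℝ) : EReal) - f y

/-- The duality pairing `⟨x, x*⟩` on `X × X*`. -/
def pairing (z : X × StrongDual ℝ X) : ℝ := z.2 z.1

/-- `h* ∘ i`, the conjugate of `h : X × X* → ℝ ∪ {+∞}` with respect to the pairing
`⟨(x,x*),(y*,y)⟩ = ⟨x,y*⟩ + ⟨y,x*⟩`, composed with the swap `i(x,x*) = (x*,x)`. -/
def conjI (h : X × StrongDual ℝ X → EReal) (z : X × StrongDual ℝ X) : EReal :=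
  ⨆ w : X × StrongDual ℝ X, ((z.2 w.1 + w.2 z.1 : ℝ) : EReal) - h w

/-- The averaging map `A h := (1/2)(h + h* ∘ i)`. -/
def Amap (h : X × StrongDual ℝ X → EReal) : X × StrongDual ℝ X → EReal :=
  fun z => (((1 : ℝ)/2 : ℝ) : EReal) * (h z + conjI h z)

/-- Monotone multivalued operator `T : X ⇉ X*`. -/
def IsMonotoneOp (T : X → Set (StrongDual ℝ X)) : Prop :=
  ∀ ⦃x p y q⦄, p ∈ T x → q ∈ T y → 0 ≤ (p - q) (x - y)

/-- Maximally monotone operator. -/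
def IsMaxMonotoneOp (T : X → Set (StrongDual ℝ X)) : Prop :=
  IsMonotoneOp T ∧ ∀ x p, (∀ y q, q ∈ T y → 0 ≤ (p - q) (x - y)) → p ∈ T x

/-- The Fitzpatrick family `H(T)`: lsc convex `h ≥ ⟨·,·⟩` with equality on `gph T`. -/
def InFitzFamily (T : X → Set (StrongDual ℝ X)) (h : X × StrongDual ℝ X → EReal) : Prop :=
  LowerSemicontinuous h ∧ EConvexOn h ∧ (∀ z, (pairing z : EReal) ≤ h z) ∧
    ∀ x p, p ∈ T x → h (x, p) = (pairing (x, p) : EReal)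

/-- The δ-subdifferential of `h : X × X* → ℝ ∪ {+∞}` with respect to the pairing
`⟨(x,x*),(y*,y)⟩ = ⟨x,y*⟩ + ⟨y,x*⟩`. -/
def epsSubdiff2 (h : X × StrongDual ℝ X → EReal) (δ : ℝ) (z : X × StrongDual ℝ X) :
    Set (StrongDual ℝ X × X) :=
  {w | h z ≠ ⊤ ∧ ∀ u : X × StrongDual ℝ X,
    h z + ((w.1 (u.1 - z.1) + (u.2 - z.2) w.2 : ℝ) : EReal) ≤ h u + (δ : EReal)}

/-- The Fenchel–Young function `f^{FY}(x,x*) = f(x) + f*(x*)`. -/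
def FYfn (f : X → EReal) (z : X × StrongDual ℝ X) : EReal := f z.1 + fconj f z.2

def cip (z w : X × StrongDual ℝ X) : ℝ := z.2 w.1 + w.2 z.1

lemma cip_symm (z w : X × StrongDual ℝ X) : cip z w = cip w z := by
  simp [cip]; ring

lemma le_conjI (g : X × StrongDual ℝ X → EReal) (z w : X × StrongDual ℝ X) :
    ((cip z w : ℝ) : EReal) - g w ≤ conjI g z :=
  le_iSup (fun w => ((cip z w : ℝ) : EReal) - g w) w

lemma conjI_le (g : X × StrongDual ℝ X → EReal) (z : X × StrongDual ℝ X) (b : EReal)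
    (h : ∀ w, ((cip z w : ℝ) : EReal) - g w ≤ b) : conjI g z ≤ b :=
  iSup_le h

lemma conjI_antitone {g g' : X × StrongDual ℝ X → EReal} (h : ∀ w, g w ≤ g' w) (z : X × StrongDual ℝ X) :
    conjI g' z ≤ conjI g z :=
  iSup_mono fun w => EReal.sub_le_sub le_rfl (h w)

lemma pairing_smul_add (a b : ℝ) (z w : X × StrongDual ℝ X) :
    pairing (a • z + b • w) =
      a^2 * pairing z + a*b*(cip z w) + b^2 * pairing w := by
  simp only [pairing, cip, Prod.fst_add, Prod.snd_add, Prod.smul_fst, Prod.smul_snd,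
    ContinuousLinearMap.add_apply, ContinuousLinearMap.coe_smul', Pi.smul_apply, map_add,
    map_smul, smul_eq_mul]
  ring

lemma cip_smul_add (a b : ℝ) (x y w : X × StrongDual ℝ X) :
    cip (a • x + b • y) w = a * cip x w + b * cip y w := by
  simp only [cip, Prod.fst_add, Prod.snd_add, Prod.smul_fst, Prod.smul_snd,
    ContinuousLinearMap.add_apply, ContinuousLinearMap.coe_smul', Pi.smul_apply, map_add,
    map_smul, smul_eq_mul]
  ring

lemma affine_minorant {g : X × StrongDual ℝ X → EReal} (hconv : EConvexOn g)
    (hge : ∀ z, (pairing z : EReal) ≤ g z) {w0 : X × StrongDual ℝ X}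
    (hw0 : g w0 = (pairing w0 : EReal)) (z : X × StrongDual ℝ X) :
    ((cip z w0 - pairing w0 : ℝ) : EReal) ≤ g z := by
  rcases eq_or_ne (g z) ⊤ with htop | hne
  · rw [htop]; exact le_top
  · have hbot : g z ≠ ⊥ := ne_bot_of_le_ne_bot (EReal.coe_ne_bot _) (hge z)
    obtain ⟨r, hr⟩ : ∃ r : ℝ, g z = (r : EReal) := ⟨(g z).toReal, (EReal.coe_toReal hne hbot).symm⟩
    set C := cip z w0 with hC
    set Q := pairing w0 with hQ
    set P := pairing z with hP
    have key : ∀ t : ℝ, 0 < t → t ≤ 1 → (1-t)*(C-Q) + t*P ≤ r := by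
      intro t ht ht1
      have hcv := hconv z w0 t (1-t) ht.le (by linarith) (by ring)
      rw [hr, hw0] at hcv
      have hlow : ((pairing (t • z + (1-t) • w0) : ℝ) : EReal) ≤
          (t : EReal) * (r : EReal) + ((1-t : ℝ) : EReal) * ((Q : ℝ) : EReal) :=
        le_trans (hge _) hcv
      rw [← EReal.coe_mul, ← EReal.coe_mul, ← EReal.coe_add, EReal.coe_le_coe_iff,
        pairing_smul_add] at hlow
      have h2 : t * ((1-t)*(C-Q) + t*P) ≤ t * r := by nlinarith
      exact le_of_mul_le_mul_left h2 ht
    have main : C - Q ≤ r := by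
      refine le_of_forall_pos_le_add fun ε hε => ?_
      set D := C - Q - P with hD
      set t := min 1 (ε/(|D|+1)) with htdef
      have ht : 0 < t := lt_min one_pos (div_pos hε (by positivity))
      have ht1 : t ≤ 1 := min_le_left _ _
      have hk := key t ht ht1
      have hDb : t * D ≤ ε := by
        have h1 : t ≤ ε/(|D|+1) := min_le_right _ _
        have h2 : t * D ≤ t * |D| := mul_le_mul_of_nonneg_left (le_abs_self D) ht.le
        have h3 : t * |D| ≤ (ε/(|D|+1)) * |D| := mul_le_mul_of_nonneg_right h1 (abs_nonneg D)
        have h4 : (ε/(|D|+1)) * |D| ≤ ε := by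
          rw [div_mul_eq_mul_div, div_le_iff₀ (by positivity)]
          nlinarith [abs_nonneg D]
        linarith
      nlinarith
    rw [hr]
    exact_mod_cast main

def GoodFn (T : X → Set (StrongDual ℝ X)) (g : X × StrongDual ℝ X → EReal) : Prop :=
  EConvexOn g ∧ (∀ z, (pairing z : EReal) ≤ g z) ∧
    ∀ x p, p ∈ T x → g (x, p) = (pairing (x, p) : EReal)

lemma conjI_ge_pairing {T : X → Set (StrongDual ℝ X)} (hT : IsMaxMonotoneOp T)
    {g : X × StrongDual ℝ X → EReal} (hg : GoodFn T g) (z : X × StrongDual ℝ X) :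
    (pairing z : EReal) ≤ conjI g z := by
  by_cases hz : z.2 ∈ T z.1
  · have := le_conjI g z z
    rw [hg.2.2 z.1 z.2 hz] at this
    refine le_trans ?_ this
    rw [show ((z.1, z.2) : X × StrongDual ℝ X) = z from rfl, ← EReal.coe_sub, EReal.coe_le_coe_iff]
    simp [cip, pairing]
  · obtain ⟨y, q, hq, hlt⟩ : ∃ y q, q ∈ T y ∧ (z.2 - q) (z.1 - y) < 0 := by
      by_contra hcon
      push_neg at hcon
      exact hz (hT.2 z.1 z.2 fun y q hq => hcon y q hq)
    have := le_conjI g z (y, q)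
    rw [hg.2.2 y q hq] at this
    refine le_trans ?_ this
    rw [← EReal.coe_sub, EReal.coe_le_coe_iff]
    simp only [cip, pairing, map_sub, ContinuousLinearMap.sub_apply] at hlt ⊢
    linarith

lemma conjI_le_pairing_on_graph {T : X → Set (StrongDual ℝ X)}
    {g : X × StrongDual ℝ X → EReal} (hg : GoodFn T g) {x : X} {p : StrongDual ℝ X} (hp : p ∈ T x) :
    conjI g (x, p) ≤ (pairing (x, p) : EReal) := by
  refine conjI_le g (x, p) _ fun w => ?_
  have hmin := affine_minorant hg.1 hg.2.1 (hg.2.2 x p hp) w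
  calc ((cip (x,p) w : ℝ) : EReal) - g w
      ≤ ((cip (x,p) w : ℝ) : EReal) - ((cip w (x,p) - pairing (x,p) : ℝ) : EReal) :=
        EReal.sub_le_sub le_rfl hmin
    _ = (pairing (x,p) : EReal) := by
        rw [← EReal.coe_sub, EReal.coe_eq_coe_iff, cip_symm]; ring

lemma conjI_convex {g : X × StrongDual ℝ X → EReal} (hbot : ∀ z, g z ≠ ⊥) :
    EConvexOn (conjI g) := by
  intro x y a b ha hb hab
  rcases eq_or_lt_of_le ha with rfl | ha'
  · have hb1 : b = 1 := by linarith
    subst hb1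
    simp only [EReal.coe_zero, zero_mul, EReal.coe_one, one_mul, zero_add, zero_smul, one_smul]
    exact le_refl _
  rcases eq_or_lt_of_le hb with rfl | hb'
  · have ha1 : a = 1 := by linarith
    subst ha1
    simp only [EReal.coe_zero, zero_mul, EReal.coe_one, one_mul, add_zero, zero_smul, one_smul]
    exact le_refl _
  refine conjI_le g _ _ fun w => ?_
  rcases eq_or_ne (g w) ⊤ with htop | hne
  · rw [htop, EReal.sub_top]; exact bot_le
  · obtain ⟨s, hs⟩ : ∃ s : ℝ, g w = (s : EReal) :=
      ⟨(g w).toReal, (EReal.coe_toReal hne (hbot w)).symm⟩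
    have e1 : ((cip (a • x + b • y) w : ℝ) : EReal) - g w
        = (a : EReal) * ((cip x w - s : ℝ) : EReal) + (b : EReal) * ((cip y w - s : ℝ) : EReal) := by
      rw [hs, cip_smul_add, ← EReal.coe_sub, ← EReal.coe_mul, ← EReal.coe_mul, ← EReal.coe_add,
        EReal.coe_eq_coe_iff]
      linear_combination s * hab
    rw [e1]
    refine add_le_add ?_ ?_
    · refine mul_le_mul_of_nonneg_left ?_ (by exact_mod_cast ha)
      have := le_conjI g x w
      rwa [hs, ← EReal.coe_sub] at this
    · refine mul_le_mul_of_nonneg_left ?_ (by exact_mod_cast hb)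
      have := le_conjI g y w
      rwa [hs, ← EReal.coe_sub] at this

lemma coe_mul_add_of_ne_bot {r : ℝ} (hr : 0 ≤ r) {u v : EReal} (hu : u ≠ ⊥) (hv : v ≠ ⊥) :
    (r : EReal) * (u + v) = (r : EReal) * u + (r : EReal) * v := by
  rcases eq_or_lt_of_le hr with rfl | hr
  · simp
  · induction u with
    | bot => exact absurd rfl hu
    | top =>
        rw [EReal.top_add_of_ne_bot hv, EReal.coe_mul_top_of_pos hr,
          EReal.top_add_of_ne_bot]
        intro hb
        induction v with
        | bot => exact hv rfl
        | coe s => rw [← EReal.coe_mul] at hb; exact EReal.coe_ne_bot _ hb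
        | top => rw [EReal.coe_mul_top_of_pos hr] at hb; exact absurd hb top_ne_bot
    | coe a =>
        induction v with
        | bot => exact absurd rfl hv
        | top =>
            rw [EReal.add_top_of_ne_bot (EReal.coe_ne_bot a), EReal.coe_mul_top_of_pos hr,
              EReal.add_top_of_ne_bot (by rw [← EReal.coe_mul]; exact EReal.coe_ne_bot _)]
        | coe b => norm_cast; ring

lemma ehalf_add_self {x : EReal} (hx : x ≠ ⊥) : (((1:ℝ)/2 : ℝ) : EReal) * (x + x) = x := by
  induction x with
  | bot => exact absurd rfl hx
  | top => rw [EReal.top_add_top, EReal.coe_mul_top_of_pos (by norm_num)]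
  | coe a => norm_cast; ring

lemma coe_mul_ne_bot {r : ℝ} (hr : 0 ≤ r) {u : EReal} (hu : u ≠ ⊥) : (r:EReal) * u ≠ ⊥ := by
  rcases eq_or_lt_of_le hr with rfl | hr
  · simp
  · induction u with
    | bot => exact absurd rfl hu
    | top => rw [EReal.coe_mul_top_of_pos hr]; exact top_ne_bot
    | coe a => rw [← EReal.coe_mul]; exact EReal.coe_ne_bot _

lemma good_ne_bot {T : X → Set (StrongDual ℝ X)} {g : X × StrongDual ℝ X → EReal} (hg : GoodFn T g)
    (z : X × StrongDual ℝ X) : g z ≠ ⊥ :=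
  ne_bot_of_le_ne_bot (EReal.coe_ne_bot _) (hg.2.1 z)

lemma Amap_good {T : X → Set (StrongDual ℝ X)} (hT : IsMaxMonotoneOp T)
    {g : X × StrongDual ℝ X → EReal} (hg : GoodFn T g) : GoodFn T (Amap g) := by
  have hgb := good_ne_bot hg
  have hcb : ∀ z, conjI g z ≠ ⊥ := fun z =>
    ne_bot_of_le_ne_bot (EReal.coe_ne_bot _) (conjI_ge_pairing hT hg z)
  refine ⟨?_, ?_, ?_⟩
  · -- convexity
    intro x y a b ha hb hab
    have hJ := conjI_convex hgb x y a b ha hb hab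
    have hg' := hg.1 x y a b ha hb hab
    calc Amap g (a • x + b • y)
        ≤ (((1:ℝ)/2 : ℝ) : EReal) *
            (((a:EReal) * g x + (b:EReal) * g y) + ((a:EReal) * conjI g x + (b:EReal) * conjI g y)) := by
          exact mul_le_mul_of_nonneg_left (add_le_add hg' hJ) (by norm_num)
      _ = (a:EReal) * Amap g x + (b:EReal) * Amap g y := by
          have h1 : (a:EReal) * g x + (b:EReal) * g y + ((a:EReal) * conjI g x + (b:EReal) * conjI g y)
              = (a:EReal) * (g x + conjI g x) + (b:EReal) * (g y + conjI g y) := by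
            rw [coe_mul_add_of_ne_bot ha (hgb x) (hcb x), coe_mul_add_of_ne_bot hb (hgb y) (hcb y)]
            abel
          rw [h1, coe_mul_add_of_ne_bot (by norm_num : (0:ℝ) ≤ 1/2)
              (coe_mul_ne_bot ha (fun hc => hgb x (by
                have := hgb x; have := hcb x
                exact absurd hc (by
                  intro hcc
                  have h2 : g x + conjI g x = ⊥ := hcc
                  rcases EReal.add_eq_bot_iff.mp h2 with h | h
                  · exact hgb x h
                  · exact hcb x h))))
              (coe_mul_ne_bot hb (fun hc => by
                rcases EReal.add_eq_bot_iff.mp hc with h | h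
                · exact hgb y h
                · exact hcb y h))]
          unfold Amap
          rw [show ((1:ℝ)/2 : ℝ) = (1:ℝ)/2 from rfl]
          rw [mul_comm ((((1:ℝ)/2 : ℝ)) : EReal) ((a:EReal) * (g x + conjI g x)),
            mul_assoc, mul_comm (g x + conjI g x) ((((1:ℝ)/2:ℝ)):EReal),
            mul_comm ((((1:ℝ)/2 : ℝ)) : EReal) ((b:EReal) * (g y + conjI g y)),
            mul_assoc, mul_comm (g y + conjI g y) ((((1:ℝ)/2:ℝ)):EReal)]
  · -- ≥ pairing
    intro z
    have h1 : ((2 * pairing z : ℝ) : EReal) ≤ g z + conjI g z := by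
      rw [show (2 * pairing z : ℝ) = pairing z + pairing z by ring, EReal.coe_add]
      exact add_le_add (hg.2.1 z) (conjI_ge_pairing hT hg z)
    calc (pairing z : EReal) = (((1:ℝ)/2 : ℝ) : EReal) * ((2 * pairing z : ℝ) : EReal) := by
          norm_cast; ring
      _ ≤ Amap g z := mul_le_mul_of_nonneg_left h1 (by norm_num)
  · -- graph equality
    intro x p hp
    unfold Amap
    rw [hg.2.2 x p hp, le_antisymm (conjI_le_pairing_on_graph hg hp) (conjI_ge_pairing hT hg (x, p))]
    norm_cast; ring

lemma Amap_top {g : X × StrongDual ℝ X → EReal} {w : X × StrongDual ℝ X}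
    (hcb : conjI g w ≠ ⊥) (htop : g w = ⊤) : Amap g w = ⊤ := by
  unfold Amap
  rw [htop, EReal.top_add_of_ne_bot hcb, EReal.coe_mul_top_of_pos (by norm_num)]

lemma Amap_top' {g : X × StrongDual ℝ X → EReal} {w : X × StrongDual ℝ X}
    (hgb : g w ≠ ⊥) (htop : conjI g w = ⊤) : Amap g w = ⊤ := by
  unfold Amap
  rw [htop, EReal.add_top_of_ne_bot hgb, EReal.coe_mul_top_of_pos (by norm_num)]

lemma conjI_Amap_le {T : X → Set (StrongDual ℝ X)} (hT : IsMaxMonotoneOp T)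
    {g : X × StrongDual ℝ X → EReal} (hg : GoodFn T g) (z : X × StrongDual ℝ X) :
    conjI (Amap g) z ≤ Amap g z := by
  have hgb := good_ne_bot hg
  have hcb : ∀ w, conjI g w ≠ ⊥ := fun w =>
    ne_bot_of_le_ne_bot (EReal.coe_ne_bot _) (conjI_ge_pairing hT hg w)
  refine conjI_le _ z _ fun w => ?_
  -- if Amap g w = ⊤ then LHS = ⊥
  rcases eq_or_ne (Amap g w) ⊤ with hAw | hAw
  · rw [hAw, EReal.sub_top]; exact bot_le
  -- if g z = ⊤ or conjI g z = ⊤ then Amap g z = ⊤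
  rcases eq_or_ne (g z) ⊤ with hgz | hgz
  · rw [Amap_top (hcb z) hgz]; exact le_top
  rcases eq_or_ne (conjI g z) ⊤ with hcz | hcz
  · rw [Amap_top' (hgb z) hcz]; exact le_top
  -- now everything at z is real; and Amap g w ≠ ⊤ forces g w, conjI g w real
  have hgw : g w ≠ ⊤ := fun htp => hAw (Amap_top (hcb w) htp)
  have hcw : conjI g w ≠ ⊤ := fun htp => hAw (Amap_top' (hgb w) htp)
  obtain ⟨gz, hgz'⟩ : ∃ r : ℝ, g z = (r : EReal) := ⟨_, (EReal.coe_toReal hgz (hgb z)).symm⟩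
  obtain ⟨jz, hjz'⟩ : ∃ r : ℝ, conjI g z = (r : EReal) := ⟨_, (EReal.coe_toReal hcz (hcb z)).symm⟩
  obtain ⟨gw, hgw'⟩ : ∃ r : ℝ, g w = (r : EReal) := ⟨_, (EReal.coe_toReal hgw (hgb w)).symm⟩
  obtain ⟨jw, hjw'⟩ : ∃ r : ℝ, conjI g w = (r : EReal) := ⟨_, (EReal.coe_toReal hcw (hcb w)).symm⟩
  have key1 : cip z w - gw ≤ jz := by
    have := le_conjI g z w
    rw [hgw', hjz', ← EReal.coe_sub, EReal.coe_le_coe_iff] at this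
    exact this
  have key2 : cip z w - gz ≤ jw := by
    have := le_conjI g w z
    rw [hgz', hjw', ← EReal.coe_sub, EReal.coe_le_coe_iff, cip_symm] at this
    exact this
  have hAz : Amap g z = (((gz + jz)/2 : ℝ) : EReal) := by
    unfold Amap; rw [hgz', hjz']; norm_cast; ring
  have hAw' : Amap g w = (((gw + jw)/2 : ℝ) : EReal) := by
    unfold Amap; rw [hgw', hjw']; norm_cast; ring
  rw [hAz, hAw', ← EReal.coe_sub, EReal.coe_le_coe_iff]
  linarith

lemma Amap_le_self {T : X → Set (StrongDual ℝ X)} {g : X × StrongDual ℝ X → EReal}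
    (hg : GoodFn T g) (hc : ∀ w, conjI g w ≤ g w) (w : X × StrongDual ℝ X) :
    Amap g w ≤ g w := by
  calc Amap g w ≤ (((1:ℝ)/2 : ℝ) : EReal) * (g w + g w) :=
        mul_le_mul_of_nonneg_left (add_le_add le_rfl (hc w)) (by norm_num)
    _ = g w := ehalf_add_self (good_ne_bot hg w)

/-- monotonicity of the iterates `Aⁿh`, `(Aⁿh)* ∘ i`, and the
geometric decay of the gap on `dom(h) ∩ dom(h* ∘ i)`. -/
theorem statement10 (T : X → Set (StrongDual ℝ X)) (hT : IsMaxMonotoneOp T)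
    (h : X × StrongDual ℝ X → EReal) (hF : InFitzFamily T h) (hproper : EProper h) :
    ∀ z : X × StrongDual ℝ X,
      (∀ n : ℕ, 1 ≤ n → Amap^[n + 1] h z ≤ Amap^[n] h z) ∧
      (∀ n : ℕ, 1 ≤ n → conjI (Amap^[n] h) z ≤ conjI (Amap^[n + 1] h) z) ∧
      (∀ n : ℕ, 1 ≤ n → h z ≠ ⊤ → conjI h z ≠ ⊤ →
        Amap^[n] h z - conjI (Amap^[n] h) z ≤
          (((1 : ℝ) / 2 ^ (n - 1) : ℝ) : EReal) *
            (Amap h z - conjI (Amap h) z)) := by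
  have hgood0 : GoodFn T h := ⟨hF.2.1, hF.2.2.1, hF.2.2.2⟩
  have hgood : ∀ n : ℕ, GoodFn T (Amap^[n] h) := by
    intro n
    induction n with
    | zero => exact hgood0
    | succ m ih => rw [Function.iterate_succ_apply']; exact Amap_good hT ih
  have hJle : ∀ n : ℕ, 1 ≤ n → ∀ w, conjI (Amap^[n] h) w ≤ Amap^[n] h w := by
    intro n hn w
    obtain ⟨m, rfl⟩ := Nat.exists_eq_add_of_le hn
    rw [add_comm, Function.iterate_succ_apply']
    exact conjI_Amap_le hT (hgood m) w
  have part1 : ∀ n : ℕ, 1 ≤ n → ∀ w, Amap^[n + 1] h w ≤ Amap^[n] h w := by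
    intro n hn w
    rw [Function.iterate_succ_apply']
    exact Amap_le_self (hgood n) (hJle n hn) w
  have part2 : ∀ n : ℕ, 1 ≤ n → ∀ w, conjI (Amap^[n] h) w ≤ conjI (Amap^[n + 1] h) w := by
    intro n hn w
    exact conjI_antitone (part1 n hn) w
  intro z
  refine ⟨fun n hn => part1 n hn z, fun n hn => part2 n hn z, ?_⟩
  intro n hn hz hcz
  -- all quantities are real
  have hzb : h z ≠ ⊥ := good_ne_bot hgood0 z
  have hczb : conjI h z ≠ ⊥ :=
    ne_bot_of_le_ne_bot (EReal.coe_ne_bot _) (conjI_ge_pairing hT hgood0 z)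
  obtain ⟨h0, hh0⟩ : ∃ r : ℝ, h z = (r : EReal) := ⟨_, (EReal.coe_toReal hz hzb).symm⟩
  obtain ⟨j0, hj0⟩ : ∃ r : ℝ, conjI h z = (r : EReal) := ⟨_, (EReal.coe_toReal hcz hczb).symm⟩
  have hA1 : Amap h z = (((h0 + j0)/2 : ℝ) : EReal) := by
    unfold Amap; rw [hh0, hj0]; norm_cast; ring
  set r1 : ℝ := (h0 + j0)/2 with hr1
  have chain : ∀ n : ℕ, 1 ≤ n → Amap^[n] h z ≤ (r1 : EReal) := by
    intro n hn
    induction n with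
    | zero => omega
    | succ m ih =>
        rcases Nat.lt_or_ge 1 (m+1) with hm | hm
        · have hm1 : 1 ≤ m := by omega
          exact le_trans (part1 m hm1 z) (ih hm1)
        · have : m = 0 := by omega
          subst this
          rw [Function.iterate_one, hA1]
  have fin : ∀ n : ℕ, 1 ≤ n → ∃ a b : ℝ,
      Amap^[n] h z = (a : EReal) ∧ conjI (Amap^[n] h) z = (b : EReal) ∧ b ≤ a ∧ a ≤ r1 := by
    intro n hn
    have hna : Amap^[n] h z ≠ ⊤ := ne_top_of_le_ne_top (EReal.coe_ne_top _) (chain n hn)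
    have hnb : Amap^[n] h z ≠ ⊥ := good_ne_bot (hgood n) z
    obtain ⟨a, ha⟩ : ∃ r : ℝ, Amap^[n] h z = (r : EReal) := ⟨_, (EReal.coe_toReal hna hnb).symm⟩
    have hcna : conjI (Amap^[n] h) z ≠ ⊤ := by
      refine ne_top_of_le_ne_top ?_ (hJle n hn z)
      rw [ha]; exact EReal.coe_ne_top _
    have hcnb : conjI (Amap^[n] h) z ≠ ⊥ :=
      ne_bot_of_le_ne_bot (EReal.coe_ne_bot _) (conjI_ge_pairing hT (hgood n) z)
    obtain ⟨b, hb⟩ : ∃ r : ℝ, conjI (Amap^[n] h) z = (r : EReal) :=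
      ⟨_, (EReal.coe_toReal hcna hcnb).symm⟩
    refine ⟨a, b, ha, hb, ?_, ?_⟩
    · have := hJle n hn z; rw [ha, hb] at this; exact_mod_cast this
    · have := chain n hn; rw [ha] at this; exact_mod_cast this
  -- gap of step 1
  obtain ⟨a1, b1, ha1, hb1, hba1, har1⟩ := fin 1 le_rfl
  rw [Function.iterate_one] at ha1 hb1
  -- main induction
  have main : ∀ n : ℕ, 1 ≤ n →
      Amap^[n] h z - conjI (Amap^[n] h) z ≤
        (((1 : ℝ) / 2 ^ (n - 1) : ℝ) : EReal) * (Amap h z - conjI (Amap h) z) := by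
    intro n hn
    induction n, hn using Nat.le_induction with
    | base =>
        simp only [Function.iterate_one, pow_zero, Nat.sub_self]
        rw [show (((1:ℝ)/1 : ℝ) : EReal) = (1 : EReal) by norm_num, one_mul]
    | succ m hm ih =>
        obtain ⟨a, b, ha, hb, hba, har⟩ := fin m hm
        obtain ⟨a', b', ha', hb', hba', har'⟩ := fin (m+1) (by omega)
        have hstep : a' = (a + b)/2 := by
          have : Amap^[m+1] h z = (((a + b)/2 : ℝ) : EReal) := by
            rw [Function.iterate_succ_apply']
            show (((1:ℝ)/2 : ℝ) : EReal) * (Amap^[m] h z + conjI (Amap^[m] h) z) = _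
            rw [ha, hb]; norm_cast; ring
          rw [ha'] at this
          exact_mod_cast this
        have hbb' : b ≤ b' := by
          have := part2 m hm z
          rw [hb, hb'] at this
          exact_mod_cast this
        have ihr : a - b ≤ (1:ℝ)/2^(m-1) * (a1 - b1) := by
          rw [ha, hb, ha1, hb1, ← EReal.coe_sub, ← EReal.coe_sub, ← EReal.coe_mul,
            EReal.coe_le_coe_iff] at ih
          exact ih
        have hpow : (2:ℝ)^m = 2^(m-1) * 2 := by
          rw [← pow_succ, Nat.sub_add_cancel hm]
        have goalr : a' - b' ≤ (1:ℝ)/2^m * (a1 - b1) := by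
          have hK : (1:ℝ)/2^m * (a1 - b1) = (1/2) * ((1:ℝ)/2^(m-1) * (a1 - b1)) := by
            rw [hpow]; ring
          rw [hK]
          linarith
        rw [ha', hb', ha1, hb1, Nat.add_sub_cancel, ← EReal.coe_sub, ← EReal.coe_sub,
          ← EReal.coe_mul, EReal.coe_le_coe_iff]
        exact goalr
  exact main n hn
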